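/- If P is a complex polynomial of degree n, then for every complex number α with |α| ≥ 1 and every real p ≥ 1, (∫₀^{2π} |D_α P(e^{iθ})|^p dθ)^{1/p} ≤ n(|α|+1) · (∫₀^{2π} |P(e^{iθ})|^p dθ)^{1/p}. -/

import Mathlib

open Polynomial Real

section AzizRatherAux

open Finset Complex MeasureTheory
open scoped ENNReal NNReal

noncomputable def wr (n k : ℕ) : ℂ := Complex.exp ((2*(k:ℂ)+1) * (π:ℂ) * Complex.I / (2*(n:ℂ)))
noncomputable def sk (n k : ℕ) : ℝ := Real.sin ((2*(k:ℝ)+1) * π / (4*(n:ℝ)))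
noncomputable def cc (n k : ℕ) : ℝ := (-1)^k / (sk n k)^2
noncomputable def tkr (n k : ℕ) : ℝ := (2*(k:ℝ)+1) * π / (2*(n:ℝ))
noncomputable def Jp (p : ℝ) (f : ℝ → ℂ) : ℝ :=
  (∫ θ in (0:ℝ)..(2*π), ‖f θ‖ ^ p) ^ (1/p)



lemma p_eval (n : ℕ) (hn : 1 ≤ n) (t : ℕ) (h1 : 1 ≤ t) (h2 : t < 6*n) :
    ∑ k ∈ range (2*n), (wr n k)^t =
      if t = 2*n then (-(2*(n:ℂ))) else if t = 4*n then (2*(n:ℂ)) else 0 := by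
  have hn0 : (n:ℂ) ≠ 0 := Nat.cast_ne_zero.mpr (by omega)
  have hterm : ∀ k, (wr n k)^t =
      Complex.exp ((t:ℂ) * (π:ℂ) * Complex.I / (2*(n:ℂ))) *
        (Complex.exp ((t:ℂ) * (π:ℂ) * Complex.I / (n:ℂ)))^k := by
    intro k
    rw [wr, ← Complex.exp_nat_mul, ← Complex.exp_nat_mul, ← Complex.exp_add]
    congr 1
    field_simp
    ring
  simp only [hterm]
  rw [← Finset.mul_sum]
  by_cases ht2 : t = 2*n
  · subst ht2
    have hq : Complex.exp ((↑(2*n):ℂ) * (π:ℂ) * Complex.I / (n:ℂ)) = 1 := by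
      have : (↑(2*n):ℂ) * (π:ℂ) * Complex.I / (n:ℂ) = ((1:ℤ):ℂ) * (2 * (π:ℂ) * Complex.I) := by
        push_cast; field_simp
      rw [this, Complex.exp_int_mul_two_pi_mul_I]
    have hpre : Complex.exp ((↑(2*n):ℂ) * (π:ℂ) * Complex.I / (2*(n:ℂ))) = -1 := by
      have : (↑(2*n):ℂ) * (π:ℂ) * Complex.I / (2*(n:ℂ)) = (π:ℂ) * Complex.I := by
        push_cast; field_simp
      rw [this, Complex.exp_pi_mul_I]
    rw [hq, hpre]
    simp only [one_pow, Finset.sum_const, Finset.card_range, nsmul_eq_mul, mul_one, if_pos rfl]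
    push_cast; ring
  · by_cases ht4 : t = 4*n
    · subst ht4
      have hq : Complex.exp ((↑(4*n):ℂ) * (π:ℂ) * Complex.I / (n:ℂ)) = 1 := by
        have : (↑(4*n):ℂ) * (π:ℂ) * Complex.I / (n:ℂ) = ((2:ℤ):ℂ) * (2 * (π:ℂ) * Complex.I) := by
          push_cast; field_simp; ring
        rw [this, Complex.exp_int_mul_two_pi_mul_I]
      have hpre : Complex.exp ((↑(4*n):ℂ) * (π:ℂ) * Complex.I / (2*(n:ℂ))) = 1 := by
        have : (↑(4*n):ℂ) * (π:ℂ) * Complex.I / (2*(n:ℂ)) = ((1:ℤ):ℂ) * (2 * (π:ℂ) * Complex.I) := by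
          push_cast; field_simp; ring
        rw [this, Complex.exp_int_mul_two_pi_mul_I]
      rw [hq, hpre, if_neg ht2, if_pos rfl]
      simp only [one_pow, Finset.sum_const, Finset.card_range, nsmul_eq_mul, mul_one, one_mul]
      push_cast; ring
    · have hπI : (π:ℂ) * Complex.I ≠ 0 :=
        mul_ne_zero (Complex.ofReal_ne_zero.mpr Real.pi_ne_zero) Complex.I_ne_zero
      have hq : Complex.exp ((t:ℂ) * (π:ℂ) * Complex.I / (n:ℂ)) ≠ 1 := by
        intro h
        rw [Complex.exp_eq_one_iff] at h
        obtain ⟨l, hl⟩ := h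
        have ht : (t:ℂ) = 2*(l:ℂ)*(n:ℂ) := by
          have h2' : (t:ℂ) * ((π:ℂ) * Complex.I) = (2*(l:ℂ)*(n:ℂ)) * ((π:ℂ) * Complex.I) := by
            have hl' : (t:ℂ) * (π:ℂ) * Complex.I = (l:ℂ) * (2 * (π:ℂ) * Complex.I) * (n:ℂ) := by
              field_simp at hl
              linear_combination ((π:ℂ) * Complex.I) * hl
            linear_combination hl'
          exact mul_right_cancel₀ hπI h2'
        have htz : (t:ℤ) = 2*l*n := by exact_mod_cast ht
        have hn1 : (1:ℤ) ≤ (n:ℤ) := by exact_mod_cast hn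
        have ht1 : (1:ℤ) ≤ (t:ℤ) := by exact_mod_cast h1
        have ht6 : (t:ℤ) < 6*(n:ℤ) := by exact_mod_cast h2
        have hl1 : 1 ≤ l := by nlinarith
        have hl2 : l ≤ 2 := by nlinarith
        interval_cases l
        · apply ht2; omega
        · apply ht4; omega
      rw [geom_sum_eq hq]
      have hpow : (Complex.exp ((t:ℂ) * (π:ℂ) * Complex.I / (n:ℂ)))^(2*n) = 1 := by
        rw [← Complex.exp_nat_mul]
        have : (↑(2*n):ℂ) * ((t:ℂ) * (π:ℂ) * Complex.I / (n:ℂ)) = ((t:ℤ):ℂ) * (2 * (π:ℂ) * Complex.I) := by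
          push_cast; field_simp
        rw [this, Complex.exp_int_mul_two_pi_mul_I]
      rw [hpow]
      simp [ht2, ht4]




lemma card1 (n r : ℕ) (hr : 1 ≤ r) :
    (((range (2*n)) ×ˢ (range (2*n))).filter (fun x => x.1 + x.2 + r = 2*n)).card = 2*n+1-r := by
  rw [← Finset.card_range (2*n+1-r)]
  apply Finset.card_bij' (fun a _ => a.1) (fun b _ => (b, 2*n - r - b))
  · intro a ha; simp only [mem_filter, mem_product, mem_range] at ha ⊢; omega
  · intro b hb; simp only [mem_filter, mem_product, mem_range] at hb ⊢; omega
  · intro a ha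
    simp only [mem_filter, mem_product, mem_range] at ha
    have : 2*n - r - a.1 = a.2 := by omega
    simp [this]
  · intro b hb; rfl

lemma card2 (n r : ℕ) (hr : 1 ≤ r) (hr2 : r ≤ 2*n+1) :
    (((range (2*n)) ×ˢ (range (2*n))).filter (fun x => x.1 + x.2 + r = 4*n)).card = r-1 := by
  rw [← Finset.card_range (r-1)]
  apply Finset.card_bij' (fun a _ => a.1 - (2*n+1-r)) (fun b _ => (2*n+1-r+b, 2*n-1-b))
  · intro a ha; simp only [mem_filter, mem_product, mem_range] at ha ⊢; omega
  · intro b hb; simp only [mem_filter, mem_product, mem_range] at hb ⊢; omega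
  · intro a ha
    simp only [mem_filter, mem_product, mem_range] at ha
    have h1 : 2*n+1-r + (a.1 - (2*n+1-r)) = a.1 := by omega
    have h2 : 2*n-1-(a.1 - (2*n+1-r)) = a.2 := by omega
    simp [h1, h2]
  · intro b hb; simp only [mem_range] at hb; omega

lemma lemC (n r : ℕ) (hn : 1 ≤ n) (hr : 1 ≤ r) (hr2 : r ≤ 2*n+1) :
    ∑ k ∈ range (2*n), (wr n k)^r * (∑ i ∈ range (2*n), (wr n k)^i)^2 =
      4*(n:ℂ)*((r:ℂ) - (n:ℂ) - 1) := by
  have step1 : ∀ k, (wr n k)^r * (∑ i ∈ range (2*n), (wr n k)^i)^2 =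
      ∑ x ∈ (range (2*n)) ×ˢ (range (2*n)), (wr n k)^(r + x.1 + x.2) := by
    intro k
    rw [sq, Finset.sum_mul_sum, Finset.sum_product]
    rw [Finset.mul_sum]
    refine Finset.sum_congr rfl fun i _ => ?_
    rw [Finset.mul_sum]
    refine Finset.sum_congr rfl fun j _ => ?_
    rw [← pow_add, ← pow_add]
    ring_nf
  simp only [step1]
  rw [Finset.sum_comm]
  have step2 : ∀ x ∈ (range (2*n)) ×ˢ (range (2*n)),
      ∑ k ∈ range (2*n), (wr n k)^(r + x.1 + x.2) =
      (if x.1 + x.2 + r = 2*n then (-(2*(n:ℂ))) else 0)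
        + (if x.1 + x.2 + r = 4*n then (2*(n:ℂ)) else 0) := by
    intro x hx
    simp only [mem_product, mem_range] at hx
    rw [p_eval n hn (r + x.1 + x.2) (by omega) (by omega)]
    by_cases h1 : x.1 + x.2 + r = 2*n
    · rw [if_pos (by omega), if_pos h1, if_neg (by omega)]; ring
    · by_cases h2 : x.1 + x.2 + r = 4*n
      · rw [if_neg (by omega), if_pos (by omega), if_neg h1, if_pos h2]; ring
      · rw [if_neg (by omega), if_neg (by omega), if_neg h1, if_neg h2]; ring
  rw [Finset.sum_congr rfl step2, Finset.sum_add_distrib,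
    ← Finset.sum_filter, ← Finset.sum_filter, Finset.sum_const, Finset.sum_const,
    card1 n r hr, card2 n r hr hr2]
  have e1 : ((2*n+1-r : ℕ) : ℂ) = 2*(n:ℂ)+1-(r:ℂ) := by
    push_cast [Nat.cast_sub hr2]; ring
  have e2 : ((r-1 : ℕ) : ℂ) = (r:ℂ)-1 := by
    push_cast [Nat.cast_sub hr]; ring
  rw [nsmul_eq_mul, nsmul_eq_mul, e1, e2]
  ring




lemma wr_ne_zero (n k : ℕ) : wr n k ≠ 0 := Complex.exp_ne_zero _

lemma sk_pos (n k : ℕ) (hn : 1 ≤ n) (hk : k < 2*n) : 0 < sk n k := by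
  apply Real.sin_pos_of_pos_of_lt_pi
  · positivity
  · rw [div_lt_iff₀ (by positivity)]
    have h1 : 2*k+1 < 4*n := by omega
    have h2 : (2*(k:ℝ)+1) < 4*(n:ℝ) := by exact_mod_cast h1
    nlinarith [Real.pi_pos]

lemma wr_pow_2n (n k : ℕ) (hn : 1 ≤ n) : (wr n k)^(2*n) = -1 := by
  have hn0 : (n:ℂ) ≠ 0 := Nat.cast_ne_zero.mpr (by omega)
  rw [wr, ← Complex.exp_nat_mul]
  have : (↑(2*n):ℂ) * ((2*(k:ℂ)+1) * (π:ℂ) * Complex.I / (2*(n:ℂ)))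
      = (↑(2*k+1):ℕ) * ((π:ℂ) * Complex.I) := by push_cast; field_simp
  rw [this, Complex.exp_nat_mul, Complex.exp_pi_mul_I]
  exact Odd.neg_one_pow ⟨k, by ring⟩

lemma wr_pow_n (n k : ℕ) (hn : 1 ≤ n) : (wr n k)^n = Complex.I * (-1)^k := by
  have hn0 : (n:ℂ) ≠ 0 := Nat.cast_ne_zero.mpr (by omega)
  rw [wr, ← Complex.exp_nat_mul]
  have harg : (n:ℂ) * ((2*(k:ℂ)+1) * (π:ℂ) * Complex.I / (2*(n:ℂ)))
      = (↑(k:ℕ)) * ((π:ℂ) * Complex.I) + ((π/2:ℝ):ℂ) * Complex.I := by push_cast; field_simp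
  rw [harg, Complex.exp_add, Complex.exp_nat_mul, Complex.exp_pi_mul_I]
  have : Complex.exp (((π/2:ℝ):ℂ) * Complex.I) = Complex.I := by
    rw [Complex.exp_mul_I, ← Complex.ofReal_cos, ← Complex.ofReal_sin,
      Real.cos_pi_div_two, Real.sin_pi_div_two]
    simp
  rw [this]; ring

lemma geom_wr (n k : ℕ) (hn : 1 ≤ n) :
    (∑ i ∈ range (2*n), (wr n k)^i) * (wr n k - 1) = -2 := by
  rw [geom_sum_mul, wr_pow_2n n k hn]; ring

lemma sin_wr (n k : ℕ) (hn : 1 ≤ n) :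
    4 * wr n k * ((sk n k : ℂ))^2 = -(wr n k - 1)^2 := by
  have hn0 : (n:ℂ) ≠ 0 := Nat.cast_ne_zero.mpr (by omega)
  have hsin : (sk n k : ℂ) = Complex.sin (((2*(k:ℝ)+1) * π / (4*(n:ℝ)) : ℝ):ℂ) := by
    rw [sk, Complex.ofReal_sin]
  have hwr : wr n k = Complex.exp ((((2*(k:ℝ)+1) * π / (4*(n:ℝ)) : ℝ):ℂ) * Complex.I) *
      Complex.exp ((((2*(k:ℝ)+1) * π / (4*(n:ℝ)) : ℝ):ℂ) * Complex.I) := by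
    rw [wr, ← Complex.exp_add]
    congr 1
    push_cast
    field_simp
    ring
  have hEF : Complex.exp ((((2*(k:ℝ)+1) * π / (4*(n:ℝ)) : ℝ):ℂ) * Complex.I) *
      Complex.exp (-((((2*(k:ℝ)+1) * π / (4*(n:ℝ)) : ℝ):ℂ)) * Complex.I) = 1 := by
    rw [← Complex.exp_add]; ring_nf; exact Complex.exp_zero
  have hsin2 : Complex.sin ((((2*(k:ℝ)+1) * π / (4*(n:ℝ)) : ℝ):ℂ)) =
      (Complex.exp (-((((2*(k:ℝ)+1) * π / (4*(n:ℝ)) : ℝ):ℂ)) * Complex.I) -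
        Complex.exp ((((2*(k:ℝ)+1) * π / (4*(n:ℝ)) : ℝ):ℂ) * Complex.I)) * Complex.I / 2 := by
    rw [Complex.sin]
  rw [hsin, hsin2, hwr]
  set E := Complex.exp ((((2*(k:ℝ)+1) * π / (4*(n:ℝ)) : ℝ):ℂ) * Complex.I)
  set F := Complex.exp (-((((2*(k:ℝ)+1) * π / (4*(n:ℝ)) : ℝ):ℂ)) * Complex.I)
  linear_combination (2*E^2 - E*F - 1) * hEF + E^2*(F-E)^2 * Complex.I_sq




lemma key_wr (n k : ℕ) (hn : 1 ≤ n) (hk : k < 2*n) :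
    wr n k * (∑ i ∈ range (2*n), (wr n k)^i)^2 * ((sk n k : ℂ))^2 = -1 := by
  have hsq : (∑ i ∈ range (2*n), (wr n k)^i)^2 * (wr n k - 1)^2 = 4 := by
    rw [← mul_pow, geom_wr n k hn]; norm_num
  linear_combination ((∑ i ∈ range (2*n), (wr n k)^i)^2/4) * sin_wr n k hn - (1/4 : ℂ) * hsq

lemma term_A (n k m : ℕ) (hn : 1 ≤ n) (hk : k < 2*n) :
    ((cc n k : ℝ) : ℂ) * (wr n k)^m =
      Complex.I * (wr n k)^(n+m+1) * (∑ i ∈ range (2*n), (wr n k)^i)^2 := by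
  have hs : ((sk n k : ℝ) : ℂ) ≠ 0 := by
    exact_mod_cast ne_of_gt (sk_pos n k hn hk)
  have hcast : ((cc n k : ℝ) : ℂ) = (-1)^k / ((sk n k : ℝ):ℂ)^2 := by
    rw [cc]; push_cast; ring
  rw [hcast, pow_add, pow_add, pow_one, wr_pow_n n k hn]
  field_simp
  linear_combination (wr n k)^m * key_wr n k hn hk -
    (wr n k)^m * (wr n k) * (∑ i ∈ range (2*n), (wr n k)^i)^2 * ((sk n k : ℝ):ℂ)^2 * Complex.I_sq

lemma lemA (n m : ℕ) (hn : 1 ≤ n) (hm : m ≤ n) :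
    ∑ k ∈ range (2*n), ((cc n k : ℝ) : ℂ) * (wr n k)^m = 4*(n:ℂ)*(m:ℂ)*Complex.I := by
  rw [Finset.sum_congr rfl (fun k hk => term_A n k m hn (Finset.mem_range.mp hk))]
  have : ∀ k, Complex.I * (wr n k)^(n+m+1) * (∑ i ∈ range (2*n), (wr n k)^i)^2 =
      Complex.I * ((wr n k)^(n+m+1) * (∑ i ∈ range (2*n), (wr n k)^i)^2) := fun k => by ring
  simp only [this]
  rw [← Finset.mul_sum, lemC n (n+m+1) hn (by omega) (by omega)]
  push_cast; ring

lemma lemB (n : ℕ) (hn : 1 ≤ n) :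
    ∑ k ∈ range (2*n), 1/(sk n k)^2 = 4*(n:ℝ)^2 := by
  have hC : ∑ k ∈ range (2*n), ((1/(sk n k)^2 : ℝ) : ℂ) = 4*(n:ℂ)^2 := by
    have : ∀ k ∈ range (2*n), ((1/(sk n k)^2 : ℝ) : ℂ) =
        -((wr n k)^1 * (∑ i ∈ range (2*n), (wr n k)^i)^2) := by
      intro k hk
      have hk' := Finset.mem_range.mp hk
      have hs : ((sk n k : ℝ) : ℂ) ≠ 0 := by
        exact_mod_cast ne_of_gt (sk_pos n k hn hk')
      have hkey := key_wr n k hn hk'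
      push_cast
      rw [pow_one]
      field_simp
      linear_combination hkey
    rw [Finset.sum_congr rfl this, Finset.sum_neg_distrib, lemC n 1 hn le_rfl (by omega)]
    push_cast; ring
  exact_mod_cast hC



lemma Jp_nonneg (p : ℝ) (f : ℝ → ℂ) : 0 ≤ Jp p f := by
  apply Real.rpow_nonneg
  apply intervalIntegral.integral_nonneg (by positivity)
  intro u _
  positivity

lemma Jp_congr_abs (p : ℝ) (f g : ℝ → ℂ) (h : ∀ x, ‖f x‖ = ‖g x‖) :
    Jp p f = Jp p g := by
  unfold Jp
  congr 1
  apply intervalIntegral.integral_congr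
  intro x _
  dsimp only
  rw [h x]

lemma A_eq (p : ℝ) (hp : 1 ≤ p) (f : ℝ → ℂ) (hf : Continuous f) :
    (∫⁻ x in Set.Ioc (0:ℝ) (2*π), (‖f x‖₊ : ℝ≥0∞) ^ p)
      = ENNReal.ofReal (∫ x in Set.Ioc (0:ℝ) (2*π), ‖f x‖ ^ p) := by
  have hcont : Continuous fun x => ‖f x‖ ^ p :=
    (continuous_norm.comp hf).rpow_const (fun x => Or.inr (by linarith))
  rw [MeasureTheory.ofReal_integral_eq_lintegral_ofReal hcont.integrableOn_Ioc
    (Filter.Eventually.of_forall (fun x => by positivity))]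
  apply lintegral_congr
  intro x
  rw [← ENNReal.ofReal_rpow_of_nonneg (norm_nonneg _) (by linarith)]
  congr 1
  rw [← coe_nnnorm, ENNReal.ofReal_coe_nnreal]

lemma Jp_eq (p : ℝ) (hp : 1 ≤ p) (f : ℝ → ℂ) (hf : Continuous f) :
    Jp p f = ((∫⁻ x in Set.Ioc (0:ℝ) (2*π), (‖f x‖₊ : ℝ≥0∞) ^ p) ^ (1/p)).toReal := by
  rw [Jp, intervalIntegral.integral_of_le (by positivity : (0:ℝ) ≤ 2*π),
    ← ENNReal.toReal_rpow, A_eq p hp f hf, ENNReal.toReal_ofReal]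
  apply MeasureTheory.integral_nonneg
  intro x
  positivity

lemma A_ne_top (p : ℝ) (hp : 1 ≤ p) (f : ℝ → ℂ) (hf : Continuous f) :
    (∫⁻ x in Set.Ioc (0:ℝ) (2*π), (‖f x‖₊ : ℝ≥0∞) ^ p) ≠ ⊤ := by
  rw [A_eq p hp f hf]; exact ENNReal.ofReal_ne_top

lemma Jp_add_le (p : ℝ) (hp : 1 ≤ p) (f g : ℝ → ℂ) (hf : Continuous f) (hg : Continuous g) :
    Jp p (fun x => f x + g x) ≤ Jp p f + Jp p g := by
  have hp0 : (0:ℝ) ≤ p := by linarith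
  rw [Jp_eq p hp (fun x => f x + g x) (hf.add hg), Jp_eq p hp f hf, Jp_eq p hp g hg]
  have hmf : AEMeasurable (fun x => (‖f x‖₊ : ℝ≥0∞)) (volume.restrict (Set.Ioc (0:ℝ) (2*π))) :=
    (hf.measurable.nnnorm.coe_nnreal_ennreal).aemeasurable
  have hmg : AEMeasurable (fun x => (‖g x‖₊ : ℝ≥0∞)) (volume.restrict (Set.Ioc (0:ℝ) (2*π))) :=
    (hg.measurable.nnnorm.coe_nnreal_ennreal).aemeasurable
  have hmink := ENNReal.lintegral_Lp_add_le hmf hmg hp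
  have hstep : (∫⁻ x in Set.Ioc (0:ℝ) (2*π), (‖f x + g x‖₊ : ℝ≥0∞) ^ p) ^ (1/p)
      ≤ ((∫⁻ x in Set.Ioc (0:ℝ) (2*π), (‖f x‖₊ : ℝ≥0∞) ^ p) ^ (1/p)
        + (∫⁻ x in Set.Ioc (0:ℝ) (2*π), (‖g x‖₊ : ℝ≥0∞) ^ p) ^ (1/p)) := by
    refine le_trans ?_ hmink
    apply ENNReal.rpow_le_rpow _ (by positivity)
    apply lintegral_mono
    intro x
    apply ENNReal.rpow_le_rpow _ hp0
    simp only [Pi.add_apply]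
    exact_mod_cast nnnorm_add_le (f x) (g x)
  calc ((∫⁻ x in Set.Ioc (0:ℝ) (2*π), (‖f x + g x‖₊ : ℝ≥0∞) ^ p) ^ (1/p)).toReal
      ≤ (((∫⁻ x in Set.Ioc (0:ℝ) (2*π), (‖f x‖₊ : ℝ≥0∞) ^ p) ^ (1/p)
        + (∫⁻ x in Set.Ioc (0:ℝ) (2*π), (‖g x‖₊ : ℝ≥0∞) ^ p) ^ (1/p))).toReal := by
        apply ENNReal.toReal_mono _ hstep
        exact ENNReal.add_ne_top.mpr
          ⟨ENNReal.rpow_ne_top_of_nonneg (by positivity) (A_ne_top p hp f hf),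
           ENNReal.rpow_ne_top_of_nonneg (by positivity) (A_ne_top p hp g hg)⟩
    _ = _ := ENNReal.toReal_add
          (ENNReal.rpow_ne_top_of_nonneg (by positivity) (A_ne_top p hp f hf))
          (ENNReal.rpow_ne_top_of_nonneg (by positivity) (A_ne_top p hp g hg))

lemma Jp_zero (p : ℝ) (hp : 1 ≤ p) : Jp p (fun _ => 0) = 0 := by
  unfold Jp
  rw [show (∫ θ in (0:ℝ)..(2*π), ‖(0:ℂ)‖ ^ p) = 0 by
    simp [Real.zero_rpow (by linarith : p ≠ 0)]]
  exact Real.zero_rpow (by positivity)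

lemma Jp_sum_le (p : ℝ) (hp : 1 ≤ p) {ι : Type*} (s : Finset ι) (h : ι → ℝ → ℂ)
    (hc : ∀ i ∈ s, Continuous (h i)) :
    Jp p (fun x => ∑ i ∈ s, h i x) ≤ ∑ i ∈ s, Jp p (h i) := by
  classical
  induction s using Finset.induction_on with
  | empty => simp [Jp_zero p hp]
  | @insert a s' hni ih =>
    rw [Finset.sum_insert hni]
    have hca : Continuous (h a) := hc a (Finset.mem_insert_self a s')
    have hcs : Continuous (fun x => ∑ i ∈ s', h i x) := by
      apply continuous_finset_sum
      intro i hi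
      exact hc i (Finset.mem_insert_of_mem hi)
    calc Jp p (fun x => ∑ i ∈ insert a s', h i x)
        = Jp p (fun x => h a x + ∑ i ∈ s', h i x) := by
          apply Jp_congr_abs; intro x; rw [Finset.sum_insert hni]
      _ ≤ Jp p (h a) + Jp p (fun x => ∑ i ∈ s', h i x) := Jp_add_le p hp _ _ hca hcs
      _ ≤ Jp p (h a) + ∑ i ∈ s', Jp p (h i) := by
          have := ih (fun i hi => hc i (Finset.mem_insert_of_mem hi))
          linarith

lemma Jp_smul (p : ℝ) (hp : 1 ≤ p) (c : ℂ) (f : ℝ → ℂ) :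
    Jp p (fun x => c * f x) = ‖c‖ * Jp p f := by
  have hp0 : p ≠ 0 := by linarith
  unfold Jp
  have : ∀ θ, ‖c * f θ‖ ^ p = ‖c‖ ^ p * ‖f θ‖ ^ p := by
    intro θ
    rw [norm_mul, Real.mul_rpow (norm_nonneg _) (norm_nonneg _)]
  rw [intervalIntegral.integral_congr (fun x _ => this x), intervalIntegral.integral_const_mul,
    Real.mul_rpow (by positivity) (intervalIntegral.integral_nonneg (by positivity)
      (fun u _ => by positivity)),
    ← Real.rpow_mul (norm_nonneg c), mul_one_div_cancel hp0, Real.rpow_one]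

lemma Jp_translate (p : ℝ) (f : ℝ → ℂ) (t : ℝ) (hper : Function.Periodic f (2*π)) :
    Jp p (fun x => f (x + t)) = Jp p f := by
  unfold Jp
  congr 1
  have : (∫ θ in (0:ℝ)..(2*π), ‖f (θ + t)‖ ^ p)
      = ∫ θ in t..(t + 2*π), ‖f θ‖ ^ p := by
    rw [intervalIntegral.integral_comp_add_right (fun θ => ‖f θ‖ ^ p) t]
    norm_num [add_comm]
  rw [this]
  have hper' : Function.Periodic (fun θ => ‖f θ‖ ^ p) (2*π) := by
    intro x; simp [hper x]
  have := hper'.intervalIntegral_add_eq t 0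
  simpa using this




lemma wr_eq_exp_tkr (n k : ℕ) (hn : 1 ≤ n) :
    wr n k = Complex.exp (((tkr n k : ℝ):ℂ) * Complex.I) := by
  have hn0 : (n:ℝ) ≠ 0 := Nat.cast_ne_zero.mpr (by omega)
  rw [wr, tkr]
  congr 1
  push_cast
  field_simp

lemma lemR (n : ℕ) (hn : 1 ≤ n) (b : ℕ → ℂ) (x : ℝ) :
    ∑ k ∈ range (2*n), ((cc n k : ℝ) : ℂ) *
      (∑ m ∈ range (n+1), b m * Complex.exp ((m:ℂ)*(((x + tkr n k : ℝ)):ℂ)*Complex.I))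
    = 4*(n:ℂ) * ∑ m ∈ range (n+1), b m * ((m:ℂ)*Complex.I) * Complex.exp ((m:ℂ)*((x:ℝ):ℂ)*Complex.I) := by
  have hsplit : ∀ k m : ℕ, Complex.exp ((m:ℂ)*(((x + tkr n k : ℝ)):ℂ)*Complex.I)
      = Complex.exp ((m:ℂ)*((x:ℝ):ℂ)*Complex.I) * (wr n k)^m := by
    intro k m
    rw [wr_eq_exp_tkr n k hn, ← Complex.exp_nat_mul, ← Complex.exp_add]
    congr 1
    push_cast
    ring
  simp only [hsplit, Finset.mul_sum]
  rw [Finset.sum_comm]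
  refine Finset.sum_congr rfl fun m hm => ?_
  have hm' : m ≤ n := by
    have := Finset.mem_range.mp hm; omega
  have : ∑ k ∈ range (2*n), ((cc n k : ℝ) : ℂ) * (b m * (Complex.exp ((m:ℂ)*((x:ℝ):ℂ)*Complex.I) * (wr n k)^m))
      = b m * Complex.exp ((m:ℂ)*((x:ℝ):ℂ)*Complex.I) * ∑ k ∈ range (2*n), ((cc n k : ℝ) : ℂ) * (wr n k)^m := by
    rw [Finset.mul_sum]
    exact Finset.sum_congr rfl fun k _ => by ring
  rw [this, lemA n m hn hm']
  ring

lemma cont_exp_mul (m : ℕ) : Continuous fun x : ℝ => Complex.exp ((m:ℂ)*((x:ℝ):ℂ)*Complex.I) := by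
  apply Complex.continuous_exp.comp
  continuity

lemma per_F (n : ℕ) (b : ℕ → ℂ) :
    Function.Periodic (fun x : ℝ => ∑ m ∈ range (n+1), b m * Complex.exp ((m:ℂ)*((x:ℝ):ℂ)*Complex.I)) (2*π) := by
  intro x
  refine Finset.sum_congr rfl fun m _ => ?_
  congr 1
  have : ((m:ℂ)*(((x + 2*π:ℝ)):ℂ)*Complex.I) = (m:ℂ)*((x:ℝ):ℂ)*Complex.I + (m:ℕ) * (2*(π:ℂ)*Complex.I) := by push_cast; ring
  rw [this, Complex.exp_add, Complex.exp_nat_mul, Complex.exp_two_pi_mul_I, one_pow, mul_one]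

lemma lemZ (n : ℕ) (hn : 1 ≤ n) (p : ℝ) (hp : 1 ≤ p) (b : ℕ → ℂ) :
    Jp p (fun x => ∑ m ∈ range (n+1), b m * ((m:ℂ)*Complex.I) * Complex.exp ((m:ℂ)*((x:ℝ):ℂ)*Complex.I))
      ≤ n * Jp p (fun x => ∑ m ∈ range (n+1), b m * Complex.exp ((m:ℂ)*((x:ℝ):ℂ)*Complex.I)) := by
  set F : ℝ → ℂ := fun x => ∑ m ∈ range (n+1), b m * Complex.exp ((m:ℂ)*((x:ℝ):ℂ)*Complex.I) with hF
  have hFcont : Continuous F := by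
    apply continuous_finset_sum
    intro m _
    exact continuous_const.mul (cont_exp_mul m)
  have h4n : ((4*(n:ℝ)):ℝ) ≠ 0 := by positivity
  have h4nC : ((4*(n:ℝ)):ℂ) ≠ 0 := by exact_mod_cast h4n
  have hfd : (fun x => ∑ m ∈ range (n+1), b m * ((m:ℂ)*Complex.I) * Complex.exp ((m:ℂ)*((x:ℝ):ℂ)*Complex.I))
      = fun x => ∑ k ∈ range (2*n), ((cc n k / (4*(n:ℝ)) : ℝ) : ℂ) * F (x + tkr n k) := by
    funext x
    have hR := lemR n hn b x
    have : ∑ k ∈ range (2*n), ((cc n k / (4*(n:ℝ)) : ℝ) : ℂ) * F (x + tkr n k)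
        = (∑ k ∈ range (2*n), ((cc n k : ℝ) : ℂ) *
            (∑ m ∈ range (n+1), b m * Complex.exp ((m:ℂ)*(((x + tkr n k : ℝ)):ℂ)*Complex.I))) / (4*(n:ℝ)) := by
      rw [Finset.sum_div]
      refine Finset.sum_congr rfl fun k _ => ?_
      rw [hF]
      push_cast
      ring
    rw [this, hR, eq_comm, div_eq_iff h4nC]
    push_cast
    ring
  rw [hfd]
  have hcontk : ∀ k ∈ range (2*n), Continuous (fun x => ((cc n k / (4*(n:ℝ)) : ℝ) : ℂ) * F (x + tkr n k)) := by
    intro k _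
    exact continuous_const.mul (hFcont.comp (continuous_add_right _))
  calc Jp p (fun x => ∑ k ∈ range (2*n), ((cc n k / (4*(n:ℝ)) : ℝ) : ℂ) * F (x + tkr n k))
      ≤ ∑ k ∈ range (2*n), Jp p (fun x => ((cc n k / (4*(n:ℝ)) : ℝ) : ℂ) * F (x + tkr n k)) :=
        Jp_sum_le p hp _ _ hcontk
    _ = ∑ k ∈ range (2*n), (1/(sk n k)^2 / (4*(n:ℝ))) * Jp p F := by
        refine Finset.sum_congr rfl fun k hk => ?_
        rw [Jp_smul p hp, Jp_translate p F (tkr n k) (per_F n b)]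
        congr 1
        have hskp := sk_pos n k hn (Finset.mem_range.mp hk)
        have hnpos : (0:ℝ) < (n:ℝ) := by exact_mod_cast hn
        rw [Complex.norm_real, Real.norm_eq_abs, abs_div, cc, abs_div,
          abs_of_pos (pow_pos hskp 2), abs_of_pos (show (0:ℝ) < 4*(n:ℝ) by linarith)]
        simp
    _ = n * Jp p F := by
        have hnpos : (0:ℝ) < (n:ℝ) := by exact_mod_cast hn
        have : ∀ k ∈ range (2*n), (1/(sk n k)^2 / (4*(n:ℝ))) * Jp p F
            = (1/(sk n k)^2) * (Jp p F / (4*(n:ℝ))) := by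
          intro k _; ring
        rw [Finset.sum_congr rfl this, ← Finset.sum_mul, lemB n hn]
        have hne : (n:ℝ) ≠ 0 := by linarith
        field_simp


lemma lemE (P : Polynomial ℂ) (N : ℕ) (hN : P.natDegree ≤ N) (z : ℂ) :
    ∑ m ∈ range (N+1), (m:ℂ) * P.coeff m * z^m = z * P.derivative.eval z := by
  have hd : P.derivative.natDegree < N + 1 :=
    lt_of_le_of_lt (le_trans (P.natDegree_derivative_le) (le_trans (Nat.sub_le _ _) hN))
      (Nat.lt_succ_self N)
  rw [Polynomial.eval_eq_sum_range' hd, Finset.mul_sum]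
  have hR : ∀ i ∈ range (N+1), z * (P.derivative.coeff i * z^i)
      = ((i:ℂ)+1) * P.coeff (i+1) * z^(i+1) := by
    intro i _
    rw [Polynomial.coeff_derivative]
    push_cast
    ring
  rw [Finset.sum_congr rfl hR, Finset.sum_range_succ', Finset.sum_range_succ,
    Polynomial.coeff_eq_zero_of_natDegree_lt (show P.natDegree < N+1 by omega)]
  have : ∀ i ∈ range N, ((↑(i+1):ℂ)) * P.coeff (i+1) * z^(i+1)
      = ((i:ℂ)+1) * P.coeff (i+1) * z^(i+1) := by
    intro i _; push_cast; ring
  rw [Finset.sum_congr rfl this]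
  simp




lemma hexp_pow (m : ℕ) (x : ℝ) :
    Complex.exp ((m:ℂ)*((x:ℝ):ℂ)*Complex.I) = (Complex.exp (((x:ℝ):ℂ)*Complex.I))^m := by
  rw [← Complex.exp_nat_mul]; ring_nf

lemma conj_exp (x : ℝ) : (starRingEnd ℂ) (Complex.exp (((x:ℝ):ℂ)*Complex.I))
    = Complex.exp (-(((x:ℝ):ℂ)*Complex.I)) := by
  rw [← Complex.exp_conj]
  congr 1
  simp [map_mul, Complex.conj_ofReal, Complex.conj_I]

lemma exp_split (n j : ℕ) (hj : j ≤ n) (x : ℝ) :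
    Complex.exp ((((n-j : ℕ)):ℂ)*((x:ℝ):ℂ)*Complex.I)
      = Complex.exp ((n:ℂ)*((x:ℝ):ℂ)*Complex.I) * (Complex.exp (-(((x:ℝ):ℂ)*Complex.I)))^j := by
  rw [← Complex.exp_nat_mul, ← Complex.exp_add]
  congr 1
  push_cast [Nat.cast_sub hj]
  ring

section Apps
variable (P : Polynomial ℂ) (n : ℕ)

lemma app1 (hn : P.natDegree ≤ n) (x : ℝ) :
    ∑ m ∈ range (n+1), P.coeff m * Complex.exp ((m:ℂ)*((x:ℝ):ℂ)*Complex.I)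
      = P.eval (Complex.exp (((x:ℝ):ℂ)*Complex.I)) := by
  rw [Polynomial.eval_eq_sum_range' (by omega : P.natDegree < n+1)]
  exact Finset.sum_congr rfl fun m _ => by rw [hexp_pow]

lemma app2 (hn : P.natDegree ≤ n) (x : ℝ) :
    ∑ m ∈ range (n+1), P.coeff m * ((m:ℂ)*Complex.I) * Complex.exp ((m:ℂ)*((x:ℝ):ℂ)*Complex.I)
      = Complex.I * (Complex.exp (((x:ℝ):ℂ)*Complex.I) * P.derivative.eval (Complex.exp (((x:ℝ):ℂ)*Complex.I))) := by
  rw [← lemE P n hn (Complex.exp (((x:ℝ):ℂ)*Complex.I)), Finset.mul_sum]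
  exact Finset.sum_congr rfl fun m _ => by rw [hexp_pow]; ring

lemma app3 (hn : P.natDegree ≤ n) (x : ℝ) :
    ∑ m ∈ range (n+1), (starRingEnd ℂ) (P.coeff (n-m)) * Complex.exp ((m:ℂ)*((x:ℝ):ℂ)*Complex.I)
      = Complex.exp ((n:ℂ)*((x:ℝ):ℂ)*Complex.I) *
          (starRingEnd ℂ) (P.eval (Complex.exp (((x:ℝ):ℂ)*Complex.I))) := by
  rw [← Finset.sum_range_reflect, Polynomial.eval_eq_sum_range' (by omega : P.natDegree < n+1),
    map_sum, Finset.mul_sum]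
  refine Finset.sum_congr rfl fun j hj => ?_
  have hj' : j ≤ n := by have := Finset.mem_range.mp hj; omega
  rw [Nat.add_sub_cancel, Nat.sub_sub_self hj', map_mul, map_pow, conj_exp,
    exp_split n j hj' x, hexp_pow]
  ring

lemma app4 (hn : P.natDegree ≤ n) (x : ℝ) :
    ∑ m ∈ range (n+1), (starRingEnd ℂ) (P.coeff (n-m)) * ((m:ℂ)*Complex.I) * Complex.exp ((m:ℂ)*((x:ℝ):ℂ)*Complex.I)
      = Complex.I * Complex.exp ((n:ℂ)*((x:ℝ):ℂ)*Complex.I) *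
          (starRingEnd ℂ) ((n:ℂ) * P.eval (Complex.exp (((x:ℝ):ℂ)*Complex.I))
            - Complex.exp (((x:ℝ):ℂ)*Complex.I) * P.derivative.eval (Complex.exp (((x:ℝ):ℂ)*Complex.I))) := by
  have hsum : (n:ℂ) * P.eval (Complex.exp (((x:ℝ):ℂ)*Complex.I))
      - Complex.exp (((x:ℝ):ℂ)*Complex.I) * P.derivative.eval (Complex.exp (((x:ℝ):ℂ)*Complex.I))
      = ∑ j ∈ range (n+1), ((n:ℂ)-(j:ℂ)) * P.coeff j * (Complex.exp (((x:ℝ):ℂ)*Complex.I))^j := by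
    rw [← lemE P n hn (Complex.exp (((x:ℝ):ℂ)*Complex.I)),
      Polynomial.eval_eq_sum_range' (by omega : P.natDegree < n+1), Finset.mul_sum,
      ← Finset.sum_sub_distrib]
    exact Finset.sum_congr rfl fun j _ => by ring
  rw [hsum, map_sum, Finset.mul_sum, ← Finset.sum_range_reflect]
  refine Finset.sum_congr rfl fun j hj => ?_
  have hj' : j ≤ n := by have := Finset.mem_range.mp hj; omega
  rw [Nat.add_sub_cancel, Nat.sub_sub_self hj', map_mul, map_mul, map_pow, conj_exp,
    exp_split n j hj' x, map_sub, Complex.conj_natCast, Complex.conj_natCast]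
  have : (((n-j:ℕ)):ℂ) = (n:ℂ) - (j:ℂ) := by push_cast [Nat.cast_sub hj']; ring
  rw [this]
  ring
end Apps




theorem aziz_rather_Lp_polar (n : ℕ) (P : Polynomial ℂ) (hP : P.natDegree = n)
    (α : ℂ) (hα : 1 ≤ ‖α‖) (p : ℝ) (hp : 1 ≤ p) :
    (∫ θ in (0:ℝ)..(2 * π),
        ‖(n : ℂ) * P.eval (Complex.exp (θ * Complex.I)) +
          (α - Complex.exp (θ * Complex.I)) *
            P.derivative.eval (Complex.exp (θ * Complex.I))‖ ^ p) ^ (1 / p) ≤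
      (n : ℝ) * (‖α‖ + 1) *
        (∫ θ in (0:ℝ)..(2 * π),
          ‖P.eval (Complex.exp (θ * Complex.I))‖ ^ p) ^ (1 / p) := by
  have hp0 : p ≠ 0 := by linarith
  rcases Nat.eq_zero_or_pos n with hn0 | hn1
  · subst hn0
    obtain ⟨a, rfl⟩ := Polynomial.natDegree_eq_zero.mp hP
    simp only [Nat.cast_zero, zero_mul, Polynomial.derivative_C, Polynomial.eval_zero,
      mul_zero, add_zero, map_zero, norm_zero, zero_add]
    rw [show (∫ θ in (0:ℝ)..(2*π), (0:ℝ) ^ p) = 0 by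
      simp [Real.zero_rpow hp0]]
    rw [Real.zero_rpow (by positivity : 1/p ≠ 0)]
  · -- n ≥ 1
    set z : ℝ → ℂ := fun θ => Complex.exp ((θ:ℂ) * Complex.I) with hz
    have hzc : Continuous z := by
      apply Complex.continuous_exp.comp
      continuity
    have hTc : Continuous fun θ => P.eval (z θ) :=
      (Polynomial.continuous P).comp hzc
    have hT'c : Continuous fun θ => P.derivative.eval (z θ) :=
      (Polynomial.continuous P.derivative).comp hzc
    have hn : P.natDegree ≤ n := le_of_eq hP
    show Jp p (fun θ => (n : ℂ) * P.eval (z θ) + (α - z θ) * P.derivative.eval (z θ))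
      ≤ (n:ℝ) * (‖α‖ + 1) * Jp p (fun θ => P.eval (z θ))
    have step1 : Jp p (fun θ => (n : ℂ) * P.eval (z θ) + (α - z θ) * P.derivative.eval (z θ))
        = Jp p (fun θ => (α * P.derivative.eval (z θ)) +
            ((n : ℂ) * P.eval (z θ) - z θ * P.derivative.eval (z θ))) := by
      apply Jp_congr_abs
      intro x
      congr 1
      ring
    have step2 : Jp p (fun θ => (α * P.derivative.eval (z θ)) +
            ((n : ℂ) * P.eval (z θ) - z θ * P.derivative.eval (z θ)))
        ≤ Jp p (fun θ => α * P.derivative.eval (z θ)) +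
          Jp p (fun θ => (n : ℂ) * P.eval (z θ) - z θ * P.derivative.eval (z θ)) := by
      apply Jp_add_le p hp _ _ (continuous_const.mul hT'c)
      exact (continuous_const.mul hTc).sub (hzc.mul hT'c)
    have step3 : Jp p (fun θ => α * P.derivative.eval (z θ))
        = ‖α‖ * Jp p (fun θ => P.derivative.eval (z θ)) := Jp_smul p hp α _
    have step4 : Jp p (fun θ => P.derivative.eval (z θ)) ≤ n * Jp p (fun θ => P.eval (z θ)) := by
      have e1 : Jp p (fun θ => P.derivative.eval (z θ))
          = Jp p (fun x => ∑ m ∈ range (n+1), P.coeff m * ((m:ℂ)*Complex.I) *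
              Complex.exp ((m:ℂ)*((x:ℝ):ℂ)*Complex.I)) := by
        apply Jp_congr_abs
        intro x
        rw [app2 P n hn x, norm_mul, norm_mul, Complex.norm_I, Complex.norm_exp_ofReal_mul_I,
          one_mul, one_mul]
      have e2 : Jp p (fun x => ∑ m ∈ range (n+1), P.coeff m *
              Complex.exp ((m:ℂ)*((x:ℝ):ℂ)*Complex.I)) = Jp p (fun θ => P.eval (z θ)) := by
        apply Jp_congr_abs
        intro x
        rw [app1 P n hn x]
      rw [e1, ← e2]
      exact lemZ n hn1 p hp _
    have step5 : Jp p (fun θ => (n : ℂ) * P.eval (z θ) - z θ * P.derivative.eval (z θ))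
        ≤ n * Jp p (fun θ => P.eval (z θ)) := by
      have e1 : Jp p (fun θ => (n : ℂ) * P.eval (z θ) - z θ * P.derivative.eval (z θ))
          = Jp p (fun x => ∑ m ∈ range (n+1), (starRingEnd ℂ) (P.coeff (n-m)) * ((m:ℂ)*Complex.I) *
              Complex.exp ((m:ℂ)*((x:ℝ):ℂ)*Complex.I)) := by
        apply Jp_congr_abs
        intro x
        rw [app4 P n hn x, norm_mul, norm_mul, Complex.norm_I, one_mul, Complex.norm_conj]
        rw [show ((n:ℂ)*((x:ℝ):ℂ)*Complex.I) = (((n*x:ℝ)):ℂ)*Complex.I by push_cast; ring,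
          Complex.norm_exp_ofReal_mul_I, one_mul]
      have e2 : Jp p (fun x => ∑ m ∈ range (n+1), (starRingEnd ℂ) (P.coeff (n-m)) *
              Complex.exp ((m:ℂ)*((x:ℝ):ℂ)*Complex.I)) = Jp p (fun θ => P.eval (z θ)) := by
        apply Jp_congr_abs
        intro x
        rw [app3 P n hn x, norm_mul, Complex.norm_conj]
        rw [show ((n:ℂ)*((x:ℝ):ℂ)*Complex.I) = (((n*x:ℝ)):ℂ)*Complex.I by push_cast; ring,
          Complex.norm_exp_ofReal_mul_I, one_mul]
      rw [e1, ← e2]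
      exact lemZ n hn1 p hp _
    have hJT := Jp_nonneg p (fun θ => P.eval (z θ))
    have habs : (0:ℝ) ≤ ‖α‖ := norm_nonneg α
    calc Jp p (fun θ => (n : ℂ) * P.eval (z θ) + (α - z θ) * P.derivative.eval (z θ))
        ≤ ‖α‖ * Jp p (fun θ => P.derivative.eval (z θ)) +
          Jp p (fun θ => (n : ℂ) * P.eval (z θ) - z θ * P.derivative.eval (z θ)) := by
          rw [step1, ← step3]; exact step2
      _ ≤ ‖α‖ * (n * Jp p (fun θ => P.eval (z θ))) + n * Jp p (fun θ => P.eval (z θ)) := by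
          have := mul_le_mul_of_nonneg_left step4 habs
          linarith
      _ = (n:ℝ) * (‖α‖ + 1) * Jp p (fun θ => P.eval (z θ)) := by ring

end AzizRatherAux
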